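/- Let ψ ∈ Ω be continuously differentiable on (0,∞) with ψ(t) = ∫₀^t ψ'(s) ds for all t ≥ 0. Then the following three conditions are equivalent: (i) for every a > 1, lim_{t→∞} ψ(at)/ψ(t) = 1; (ii) there exists a > 1 such that lim_{t→∞} ψ(at)/ψ(t) = 1; (iii) lim_{t→∞} t·ψ'(t)/ψ(t) = 0. -/

import Mathlib

open Filter Set Topology

theorem stmt0_aux
    (ψ ψ' : ℝ → ℝ)
    (hmono : MonotoneOn ψ (Set.Ici 0))
    (hconc : ConcaveOn ℝ (Set.Ici 0) ψ)
    (hzero : ψ 0 = 0)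
    (htop : Tendsto ψ atTop atTop)
    (hderiv : ∀ t ∈ Set.Ioi (0:ℝ), HasDerivAt ψ (ψ' t) t) :
    (∀ t : ℝ, 0 < t → 0 < ψ t) ∧ (∀ t : ℝ, 0 < t → 0 ≤ ψ' t) := by
  have hpos : ∀ t : ℝ, 0 < t → 0 < ψ t := by
    intro t ht
    obtain ⟨T, hT⟩ := eventually_atTop.1 (tendsto_atTop.mp htop 1)
    set u : ℝ := max T (t + 1) with hu
    have hut : t < u := lt_of_lt_of_le (lt_add_one t) (le_max_right _ _)
    have hu0 : 0 < u := ht.trans hut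
    have hψu : (1:ℝ) ≤ ψ u := hT u (le_max_left _ _)
    have ha : (0:ℝ) ≤ 1 - t/u := by
      rw [sub_nonneg]; exact (div_le_one hu0).2 hut.le
    have hb : (0:ℝ) ≤ t/u := by positivity
    have hcomb := hconc.2 (mem_Ici.2 (le_refl (0:ℝ))) (mem_Ici.2 hu0.le) ha hb
      (by ring : (1 - t/u) + t/u = 1)
    have heq : (1 - t/u) • (0:ℝ) + (t/u) • u = t := by
      field_simp
      simp only [smul_eq_mul, mul_zero, zero_add]
      exact div_mul_cancel₀ t hu0.ne'
    rw [heq, hzero, smul_eq_mul, smul_eq_mul, mul_zero, zero_add] at hcomb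
    have : 0 < t/u * ψ u := by positivity
    linarith
  refine ⟨hpos, fun t ht => ?_⟩
  have hs := hconc.slope_le_of_hasDerivAt (mem_Ici.2 ht.le)
    (mem_Ici.2 (by linarith : (0:ℝ) ≤ t + 1)) (lt_add_one t) (hderiv t ht)
  rw [slope_def_field, div_le_iff₀ (by linarith : (0:ℝ) < t + 1 - t)] at hs
  have hmle : ψ t ≤ ψ (t + 1) :=
    hmono (mem_Ici.2 ht.le) (mem_Ici.2 (by linarith)) (by linarith)
  nlinarith

theorem stmt0
    (ψ ψ' : ℝ → ℝ)
    (hmono : MonotoneOn ψ (Set.Ici 0))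
    (hconc : ConcaveOn ℝ (Set.Ici 0) ψ)
    (hzero : ψ 0 = 0)
    (hnonneg : ∀ t ≥ (0:ℝ), 0 ≤ ψ t)
    (htop : Tendsto ψ atTop atTop)
    (hderiv : ∀ t ∈ Set.Ioi (0:ℝ), HasDerivAt ψ (ψ' t) t)
    (hcont : ContinuousOn ψ' (Set.Ioi 0))
    (hfund : ∀ t ≥ (0:ℝ), ψ t = ∫ s in (0:ℝ)..t, ψ' s) :
    ((∀ a > (1:ℝ), Tendsto (fun t => ψ (a * t) / ψ t) atTop (𝓝 1)) ↔
      (∃ a > (1:ℝ), Tendsto (fun t => ψ (a * t) / ψ t) atTop (𝓝 1)))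
    ∧
    ((∀ a > (1:ℝ), Tendsto (fun t => ψ (a * t) / ψ t) atTop (𝓝 1)) ↔
      Tendsto (fun t => t * ψ' t / ψ t) atTop (𝓝 0)) := by
  obtain ⟨hpos, hd0⟩ := stmt0_aux ψ ψ' hmono hconc hzero htop hderiv
  -- (iii) → (i)
  have key31 : Tendsto (fun t => t * ψ' t / ψ t) atTop (𝓝 0) →
      ∀ a > (1:ℝ), Tendsto (fun t => ψ (a * t) / ψ t) atTop (𝓝 1) := by
    intro hiii a ha
    have hupper : Tendsto (fun t => 1 + (a - 1) * (t * ψ' t / ψ t)) atTop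
        (𝓝 (1 + (a - 1) * 0)) :=
      tendsto_const_nhds.add (tendsto_const_nhds.mul hiii)
    rw [mul_zero, add_zero] at hupper
    refine tendsto_of_tendsto_of_tendsto_of_le_of_le' tendsto_const_nhds hupper ?_ ?_
    · filter_upwards [eventually_gt_atTop (0:ℝ)] with t ht
      have htu : t < a * t := (lt_mul_iff_one_lt_left ht).2 ha
      exact (one_le_div (hpos t ht)).2
        (hmono (mem_Ici.2 ht.le) (mem_Ici.2 (ht.trans htu).le) htu.le)
    · filter_upwards [eventually_gt_atTop (0:ℝ)] with t ht
      have htu : t < a * t := (lt_mul_iff_one_lt_left ht).2 ha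
      have hs := hconc.slope_le_of_hasDerivAt (mem_Ici.2 ht.le)
        (mem_Ici.2 (ht.trans htu).le) htu (hderiv t ht)
      rw [slope_def_field, div_le_iff₀ (by linarith : (0:ℝ) < a * t - t)] at hs
      have hψt := hpos t ht
      have hkey : ψ (a * t) ≤ ψ t + (a - 1) * (t * ψ' t) := by nlinarith
      calc ψ (a * t) / ψ t ≤ (ψ t + (a - 1) * (t * ψ' t)) / ψ t :=
            div_le_div_of_nonneg_right hkey hψt.le |>.trans_eq rfl
        _ = 1 + (a - 1) * (t * ψ' t / ψ t) := by
            rw [add_div, div_self hψt.ne', mul_div_assoc]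
  -- (ii) → (iii)
  have key23 : ∀ a > (1:ℝ), Tendsto (fun t => ψ (a * t) / ψ t) atTop (𝓝 1) →
      Tendsto (fun t => t * ψ' t / ψ t) atTop (𝓝 0) := by
    intro a ha h
    have ha0 : (0:ℝ) < a := by linarith
    have ha1 : (0:ℝ) < a - 1 := by linarith
    have hinv : Tendsto (fun t => ψ t / ψ (a * t)) atTop (𝓝 1) := by
      have := h.inv₀ one_ne_zero
      rw [inv_one] at this
      refine this.congr fun t => ?_
      rw [inv_div]
    have hcompTend : Tendsto (fun t => (a * t) * ψ' (a * t) / ψ (a * t)) atTop (𝓝 0) := by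
      have hupper : Tendsto (fun t => a / (a - 1) * (1 - ψ t / ψ (a * t))) atTop
          (𝓝 (a / (a - 1) * (1 - 1))) :=
        tendsto_const_nhds.mul (tendsto_const_nhds.sub hinv)
      rw [sub_self, mul_zero] at hupper
      refine tendsto_of_tendsto_of_tendsto_of_le_of_le' tendsto_const_nhds hupper ?_ ?_
      · filter_upwards [eventually_gt_atTop (0:ℝ)] with t ht
        have hu0 : 0 < a * t := by positivity
        exact div_nonneg (mul_nonneg hu0.le (hd0 _ hu0)) (hpos _ hu0).le
      · filter_upwards [eventually_gt_atTop (0:ℝ)] with t ht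
        have htu : t < a * t := (lt_mul_iff_one_lt_left ht).2 ha
        have hu0 : 0 < a * t := ht.trans htu
        have hs := hconc.le_slope_of_hasDerivAt (mem_Ici.2 ht.le)
          (mem_Ici.2 hu0.le) htu (hderiv _ hu0)
        rw [slope_def_field, le_div_iff₀ (by linarith : (0:ℝ) < a * t - t)] at hs
        have hkey : ψ' (a * t) * (a * t - t) ≤ ψ (a * t) - ψ t := by nlinarith
        have hψu := hpos _ hu0
        rw [div_le_iff₀ hψu]
        have hR : a / (a - 1) * (1 - ψ t / ψ (a * t)) * ψ (a * t)
            = a / (a - 1) * (ψ (a * t) - ψ t) := by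
          field_simp
        rw [hR]
        have hEq : a * t * ψ' (a * t) = a / (a - 1) * (ψ' (a * t) * (a * t - t)) := by
          field_simp
        rw [hEq]
        exact mul_le_mul_of_nonneg_left hkey (by positivity)
    have hdiv : Tendsto (fun t : ℝ => t / a) atTop atTop :=
      tendsto_id.atTop_div_const ha0
    have hres := hcompTend.comp hdiv
    refine hres.congr fun t => ?_
    simp only [Function.comp]
    rw [mul_div_cancel₀ _ (ne_of_gt ha0)]
  constructor
  · constructor
    · intro h; exact ⟨2, one_lt_two, h 2 one_lt_two⟩
    · rintro ⟨a, ha, hten⟩; exact key31 (key23 a ha hten)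
  · constructor
    · intro h; exact key23 2 one_lt_two (h 2 one_lt_two)
    · exact key31
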